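/- Let f = a x²y² + b y²z² + c z²x² + a₁ x²yz + b₁ y²xz + c₁ z²xy be a positive semi-definite quartic form in ℝ[x,y,z]. Then f is a sum of squares of quadratic forms in x, y, z. -/

import Mathlib

open Filter Topology

private lemma quadform_nonneg_of_pos (a b c a₁ b₁ c₁ : ℝ)
    (h : ∀ X Y Z : ℝ, 0 < X * Y * Z →
      0 ≤ a * X ^ 2 + b * Y ^ 2 + c * Z ^ 2 + b₁ * X * Y + c₁ * Y * Z + a₁ * X * Z) :
    ∀ X Y Z : ℝ,
      0 ≤ a * X ^ 2 + b * Y ^ 2 + c * Z ^ 2 + b₁ * X * Y + c₁ * Y * Z + a₁ * X * Z := by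
  have h' : ∀ X Y Z : ℝ, X * Y * Z ≠ 0 →
      0 ≤ a * X ^ 2 + b * Y ^ 2 + c * Z ^ 2 + b₁ * X * Y + c₁ * Y * Z + a₁ * X * Z := by
    intro X Y Z hne
    rcases hne.lt_or_gt with hlt | hgt
    · have := h (-X) (-Y) (-Z) (by nlinarith)
      nlinarith [this]
    · exact h X Y Z hgt
  intro X Y Z
  set p : ℝ → ℕ → ℝ := fun t n => if t = 0 then 1 / (n + 1 : ℝ) else t with hp
  have hp0 : ∀ t : ℝ, Tendsto (fun n => p t n) atTop (𝓝 t) := by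
    intro t
    by_cases ht : t = 0
    · simp only [hp, if_pos ht, ht]
      exact tendsto_one_div_add_atTop_nhds_zero_nat
    · simp only [hp, if_neg ht]
      exact tendsto_const_nhds
  have hpne : ∀ (t : ℝ) (n : ℕ), p t n ≠ 0 := by
    intro t n
    by_cases ht : t = 0
    · simp only [hp, if_pos ht]
      positivity
    · simp only [hp, if_neg ht]
      exact ht
  have hc : Continuous (fun q : ℝ × ℝ × ℝ =>
      a * q.1 ^ 2 + b * q.2.1 ^ 2 + c * q.2.2 ^ 2 + b₁ * q.1 * q.2.1 + c₁ * q.2.1 * q.2.2 +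
        a₁ * q.1 * q.2.2) := by fun_prop
  have ht : Tendsto (fun n : ℕ => ((p X n, (p Y n, p Z n)) : ℝ × ℝ × ℝ)) atTop
      (𝓝 (X, (Y, Z))) :=
    (hp0 X).prodMk_nhds ((hp0 Y).prodMk_nhds (hp0 Z))
  have hlim := (hc.tendsto (X, (Y, Z))).comp ht
  refine ge_of_tendsto' hlim fun n => ?_
  exact h' _ _ _ (mul_ne_zero (mul_ne_zero (hpne X n) (hpne Y n)) (hpne Z n))


theorem stmt_7 (a b c a₁ b₁ c₁ : ℝ) (f : ℝ → ℝ → ℝ → ℝ)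
    (hf : ∀ x y z, f x y z =
      a * x ^ 2 * y ^ 2 + b * y ^ 2 * z ^ 2 + c * z ^ 2 * x ^ 2 +
        a₁ * x ^ 2 * y * z + b₁ * y ^ 2 * x * z + c₁ * z ^ 2 * x * y)
    (hpsd : ∀ x y z, 0 ≤ f x y z) :
    ∃ (n : ℕ) (g : Fin n → ℝ → ℝ → ℝ → ℝ),
      (∀ i, ∃ A B C D E F : ℝ, ∀ x y z, g i x y z =
        A * x ^ 2 + B * y ^ 2 + C * z ^ 2 + D * x * y + E * y * z + F * z * x) ∧
      ∀ x y z : ℝ, f x y z = ∑ i, g i x y z ^ 2 := by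
  -- Step 1: the associated quadratic form is nonneg on points with positive product
  have key : ∀ X Y Z : ℝ, 0 < X * Y * Z →
      0 ≤ a * X ^ 2 + b * Y ^ 2 + c * Z ^ 2 + b₁ * X * Y + c₁ * Y * Z + a₁ * X * Z := by
    intro X Y Z hprod
    have hZ : Z ≠ 0 := by rintro rfl; simp at hprod
    have hXY : X * Y ≠ 0 := by
      rintro h0; rw [h0, zero_mul] at hprod; exact lt_irrefl 0 hprod
    have hpos : 0 < X * Y / Z := by
      have hq : X * Y / Z = (X * Y * Z) / Z ^ 2 := by field_simp
      rw [hq]; positivity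
    set y : ℝ := Real.sqrt (X * Y / Z) with hy_def
    have hy : 0 < y := Real.sqrt_pos.mpr hpos
    have hy2 : y ^ 2 = X * Y / Z := Real.sq_sqrt hpos.le
    set x : ℝ := X / y with hx_def
    set z : ℝ := Y / y with hz_def
    have hxy : x * y = X := div_mul_cancel₀ _ hy.ne'
    have hyz : y * z = Y := by rw [mul_comm]; exact div_mul_cancel₀ _ hy.ne'
    have hzx : z * x = Z := by
      have hyy : y ^ 2 * Z = X * Y := by
        rw [hy2]; field_simp
      rw [hx_def, hz_def]
      field_simp
      linear_combination -hyy
    have h0 := hpsd x y z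
    rw [hf] at h0
    have hEq : a * x ^ 2 * y ^ 2 + b * y ^ 2 * z ^ 2 + c * z ^ 2 * x ^ 2 +
        a₁ * x ^ 2 * y * z + b₁ * y ^ 2 * x * z + c₁ * z ^ 2 * x * y =
        a * (x * y) ^ 2 + b * (y * z) ^ 2 + c * (z * x) ^ 2 +
          b₁ * ((x * y) * (y * z)) + c₁ * ((y * z) * (z * x)) + a₁ * ((x * y) * (z * x)) := by
      ring
    rw [hEq, hxy, hyz, hzx] at h0
    linarith [h0]
  have hQ := quadform_nonneg_of_pos a b c a₁ b₁ c₁ key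
  -- Step 2: Gram matrix
  set M : Matrix (Fin 3) (Fin 3) ℝ :=
    !![a, b₁ / 2, a₁ / 2; b₁ / 2, b, c₁ / 2; a₁ / 2, c₁ / 2, c] with hM_def
  have hherm : M.IsHermitian := by
    show M.conjTranspose = M
    ext i j
    fin_cases i <;> fin_cases j <;>
      simp [hM_def, Matrix.conjTranspose_apply]
  have hM : M.PosSemidef := by
    refine Matrix.posSemidef_iff_dotProduct_mulVec.mpr ⟨hherm, fun v => ?_⟩
    have h := hQ (v 0) (v 1) (v 2)
    simp [hM_def, Matrix.mulVec, dotProduct, Fin.sum_univ_three]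
    nlinarith [h]
  obtain ⟨B, hB⟩ : ∃ B : Matrix (Fin 3) (Fin 3) ℝ, M = star B * B := by
    open scoped MatrixOrder in exact CStarAlgebra.nonneg_iff_eq_star_mul_self.mp hM.nonneg
  have e : ∀ i j : Fin 3, M i j = B 0 i * B 0 j + B 1 i * B 1 j + B 2 i * B 2 j := by
    intro i j
    have := congrFun (congrFun hB i) j
    simpa [Matrix.mul_apply, Fin.sum_univ_three, Matrix.star_eq_conjTranspose, Matrix.conjTranspose_apply] using this
  have e00 := e 0 0; have e11 := e 1 1; have e22 := e 2 2
  have e01 := e 0 1; have e12 := e 1 2; have e02 := e 0 2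
  simp only [hM_def] at e00 e11 e22 e01 e12 e02
  simp at e00 e11 e22 e01 e12 e02
  refine ⟨3, fun i x y z => B i 0 * (x * y) + B i 1 * (y * z) + B i 2 * (z * x), ?_, ?_⟩
  · intro i
    exact ⟨0, 0, 0, B i 0, B i 1, B i 2, fun x y z => by ring⟩
  · intro x y z
    rw [hf, Fin.sum_univ_three]
    linear_combination (x * y) ^ 2 * e00 + (y * z) ^ 2 * e11 + (z * x) ^ 2 * e22 +
      2 * (x * y) * (y * z) * e01 + 2 * (y * z) * (z * x) * e12 +
      2 * (x * y) * (z * x) * e02
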